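/- arXiv:2504.12019 — 4 statements merged into one kernel-verified Lean document; each statement's English description precedes it below -/
import Mathlib

section
/- Let S = ⟨a₁,…,aₙ⟩ ⊆ ℕ^d be an affine semigroup (the submonoid of ℕ^d generated by a₁,…,aₙ), and let b, c ∈ S with b = Σᵢ βᵢaᵢ and c = Σᵢ γᵢaᵢ for βᵢ, γᵢ ∈ ℕ. Let I_A ⊆ k[x₁,…,xₙ] be the toric ideal of A = {a₁,…,aₙ}, i.e. the kernel of the k-algebra map k[x₁,…,xₙ] → k[t₁,…,t_d] sending xᵢ to t^{aᵢ}. Then b − c ∈ S (i.e. there exists s ∈ S with b = c + s) if and only if the monomial x^β belongs to the ideal I_A + ⟨x^γ⟩. -/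
open MvPolynomial

section Aux
variable {k : Type*} [Field k] {d n : ℕ} (a : Fin n → (Fin d →₀ ℕ))

lemma aux_prod_monomial {ι : Type*} (s : Finset ι) (f : ι → (Fin d →₀ ℕ)) :
    (∏ i ∈ s, monomial (f i) (1 : k)) = monomial (∑ i ∈ s, f i) 1 := by
  classical
  induction s using Finset.induction with
  | empty => simp
  | insert _ _ h ih => simp [Finset.prod_insert h, Finset.sum_insert h, ih, monomial_mul]

lemma aux_aeval_monomial (β : Fin n →₀ ℕ) :
    aeval (fun i => monomial (a i) (1 : k)) (monomial β (1 : k)) =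
      monomial (∑ i, β i • a i) 1 := by
  rw [aeval_monomial, map_one, one_mul]
  rw [Finsupp.prod_fintype _ _ (fun i => by simp)]
  simp only [monomial_pow, one_pow]
  exact aux_prod_monomial _ _

lemma aux_coeff_mem (g : MvPolynomial (Fin n) k) (e : Fin d →₀ ℕ)
    (h : coeff e (aeval (fun i => monomial (a i) (1 : k)) g) ≠ 0) :
    e ∈ AddSubmonoid.closure (Set.range a) := by
  induction g using MvPolynomial.induction_on generalizing e with
  | C r =>
      rw [aeval_C] at h
      have : e = 0 := by
        by_contra he
        simp [algebraMap_eq, coeff_C, he] at h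
        exact he h.1.symm
      rw [this]; exact zero_mem _
  | add p q hp hq =>
      rw [map_add, coeff_add] at h
      have h : coeff e (aeval (fun i => monomial (a i) (1:k)) p) +
          coeff e (aeval (fun i => monomial (a i) (1:k)) q) ≠ 0 := h
      rcases (by by_contra hc; push_neg at hc; rw [hc.1, hc.2, add_zero] at h; exact h rfl :
        coeff e (aeval (fun i => monomial (a i) (1:k)) p) ≠ 0 ∨
        coeff e (aeval (fun i => monomial (a i) (1:k)) q) ≠ 0) with h' | h'
      · exact hp e h'
      · exact hq e h'
  | mul_X p i hp =>
      rw [map_mul, aeval_X, coeff_mul_monomial'] at h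
      split_ifs at h with hle
      · rw [mul_one] at h
        have := hp (e - a i) h
        have he : e = (e - a i) + a i := (tsub_add_cancel_of_le hle).symm
        rw [he]
        exact add_mem this (AddSubmonoid.subset_closure ⟨i, rfl⟩)
      · exact absurd rfl h

lemma aux_exists_finsupp (s : Fin d →₀ ℕ) (hs : s ∈ AddSubmonoid.closure (Set.range a)) :
    ∃ δ : Fin n →₀ ℕ, s = ∑ i, δ i • a i := by
  induction hs using AddSubmonoid.closure_induction with
  | mem x hx =>
      obtain ⟨i, rfl⟩ := hx
      refine ⟨Finsupp.single i 1, ?_⟩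
      simp [Finsupp.single_apply]
  | zero => exact ⟨0, by simp⟩
  | add x y _ _ hx hy =>
      obtain ⟨δ₁, rfl⟩ := hx
      obtain ⟨δ₂, rfl⟩ := hy
      exact ⟨δ₁ + δ₂, by simp [add_smul, Finset.sum_add_distrib]⟩

end Aux

/-- Let `S ⊆ ℕ^d` be the affine monoid generated by
`A = {a₁,…,aₙ}` (nonzero vectors), `I_A ⊆ k[x₁,…,xₙ]` the toric ideal (kernel
of `xᵢ ↦ t^{aᵢ}`), and `b = Σ βᵢaᵢ`, `c = Σ γᵢaᵢ` elements of `S`.  Then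
`b − c ∈ S` (i.e. `∃ s ∈ S, b = c + s`) iff the monomial `x^β` belongs to
`I_A + ⟨x^γ⟩`. -/
theorem stmt_0 (k : Type*) [Field k] (d n : ℕ)
    (a : Fin n → (Fin d →₀ ℕ)) (ha : ∀ i, a i ≠ 0)
    (S : AddSubmonoid (Fin d →₀ ℕ)) (hS : S = AddSubmonoid.closure (Set.range a))
    (IA : Ideal (MvPolynomial (Fin n) k))
    (hIA : IA = RingHom.ker (MvPolynomial.aeval
      (fun i => MvPolynomial.monomial (a i) (1 : k))).toRingHom)
    (β γ : Fin n →₀ ℕ) :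
    (∃ s ∈ S, (∑ i, β i • a i) = (∑ i, γ i • a i) + s) ↔
      MvPolynomial.monomial β (1 : k) ∈ IA ⊔ Ideal.span {MvPolynomial.monomial γ (1 : k)} := by
  subst hS hIA
  set φ : MvPolynomial (Fin n) k →ₐ[k] MvPolynomial (Fin d) k := aeval (fun i => monomial (a i) (1 : k)) with hφ
  constructor
  · rintro ⟨s, hs, hb⟩
    obtain ⟨δ, rfl⟩ := aux_exists_finsupp a s hs
    rw [Submodule.mem_sup]
    refine ⟨monomial β 1 - monomial (γ + δ) 1, ?_, monomial (γ + δ) 1, ?_, by ring⟩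
    · rw [RingHom.mem_ker]
      have : (φ (monomial β (1:k) - monomial (γ + δ) 1)) = 0 := by
        rw [map_sub, aux_aeval_monomial, aux_aeval_monomial]
        have : (∑ i, (γ + δ) i • a i) = (∑ i, γ i • a i) + ∑ i, δ i • a i := by
          simp [add_smul, Finset.sum_add_distrib]
        rw [this, ← hb, sub_self]
      exact this
    · rw [Ideal.mem_span_singleton']
      exact ⟨monomial δ 1, by rw [monomial_mul, one_mul, add_comm]⟩
  · intro h
    rw [Submodule.mem_sup] at h
    obtain ⟨f, hf, g', hg', hfg⟩ := h
    rw [Ideal.mem_span_singleton'] at hg'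
    obtain ⟨g, rfl⟩ := hg'
    rw [RingHom.mem_ker] at hf
    have key : monomial (∑ i, β i • a i) (1:k) = φ g * monomial (∑ i, γ i • a i) 1 := by
      have := congrArg φ hfg
      rw [map_add, map_mul] at this
      have hf' : φ f = 0 := hf
      rw [← aux_aeval_monomial (k := k) a γ, ← aux_aeval_monomial (k := k) a β, ← hφ]
      rw [← this, hf', zero_add]
    have hcoeff : coeff (∑ i, β i • a i) (φ g * monomial (∑ i, γ i • a i) (1:k)) = 1 := by
      rw [← key, coeff_monomial]; simp
    rw [coeff_mul_monomial'] at hcoeff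
    split_ifs at hcoeff with hle
    · rw [mul_one] at hcoeff
      refine ⟨(∑ i, β i • a i) - ∑ i, γ i • a i, ?_, ?_⟩
      · exact aux_coeff_mem a g _ (by rw [hcoeff]; exact one_ne_zero)
      · rw [add_comm]
        exact (tsub_add_cancel_of_le hle).symm
    · exact absurd hcoeff one_ne_zero.symm
end

section
/- Let S ⊆ ℕ^d be an affine monoid generated by A = {a₁,…,aₙ} where a_{n−d+i} = ω_{n−d+i}εᵢ for positive integers ω_{n−d+i} and εᵢ the standard basis (i = 1,…,d), and suppose the cone generated by A equals the nonnegative orthant cone spanned by e₁ := a_{n−d+1},…,e_d := aₙ. Then the Apery set AP_S := {s ∈ S : s − eᵢ ∉ S for all i = 1,…,d} is a finite set. -/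
/-- Let `S ⊆ ℕ^d` be the affine monoid generated by
`A = {a₁,…,aₙ}`, where the last `d` generators are `e i = a (n-d+i) = ωᵢ εᵢ`
(positive multiples of the standard basis vectors), and suppose the cone
generated by `A` is spanned by `e₁,…,e_d` (equivalently, a positive multiple of
every generator lies in the submonoid generated by the `eᵢ`).  Then the Apery
set `AP_S = {s ∈ S : s − eᵢ ∉ S for all i}` is finite, where `s − e ∈ S` means
`∃ s' ∈ S, s = e + s'`. -/
theorem stmt_3 (d n : ℕ) (hdn : d ≤ n) (a : Fin n → (Fin d → ℕ))
    (ha : ∀ i, a i ≠ 0)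
    (S : AddSubmonoid (Fin d → ℕ)) (hS : S = AddSubmonoid.closure (Set.range a))
    (ω : Fin d → ℕ) (hω : ∀ i, 0 < ω i)
    (e : Fin d → (Fin d → ℕ)) (hedef : ∀ i j, e i j = if i = j then ω i else 0)
    (hlast : ∀ i : Fin d, e i = a (Fin.cast (Nat.sub_add_cancel hdn) (Fin.natAdd (n - d) i)))
    (hcone : ∀ j : Fin n, ∃ m : ℕ, 0 < m ∧
      m • a j ∈ AddSubmonoid.closure (Set.range e)) :
    {s | s ∈ S ∧ ∀ i : Fin d, ¬ ∃ s' ∈ S, s = e i + s'}.Finite := by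
  classical
  choose m hm hmem using hcone
  -- every element of S has a representation as a sum of generators
  have haS : ∀ j, a j ∈ S := by
    intro j; rw [hS]; exact AddSubmonoid.subset_closure ⟨j, rfl⟩
  have heS : ∀ i, e i ∈ S := fun i => (hlast i) ▸ haS _
  have hES : AddSubmonoid.closure (Set.range e) ≤ S := by
    rw [AddSubmonoid.closure_le]
    rintro x ⟨i, rfl⟩; exact heS i
  have hrep : ∀ s ∈ S, ∃ k : Fin n → ℕ, s = ∑ j, k j • a j := by
    intro s hs
    rw [hS] at hs
    induction hs using AddSubmonoid.closure_induction with
    | mem x hx =>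
      obtain ⟨j, rfl⟩ := hx
      refine ⟨Pi.single j 1, ?_⟩
      rw [Finset.sum_eq_single j]
      · simp
      · intro b _ hb; simp [Pi.single_eq_of_ne hb]
      · simp
    | zero => exact ⟨0, by simp⟩
    | add x y hx hy ihx ihy =>
      obtain ⟨k, rfl⟩ := ihx
      obtain ⟨k', rfl⟩ := ihy
      exact ⟨k + k', by simp [add_smul, Finset.sum_add_distrib]⟩
  -- nonzero elements of closure (range e) split off some e i
  have hsplit : ∀ x ∈ AddSubmonoid.closure (Set.range e),
      x = 0 ∨ ∃ i r, r ∈ AddSubmonoid.closure (Set.range e) ∧ x = e i + r := by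
    intro x hx
    induction hx using AddSubmonoid.closure_induction with
    | mem x hx =>
      obtain ⟨i, rfl⟩ := hx
      exact Or.inr ⟨i, 0, zero_mem _, (add_zero _).symm⟩
    | zero => exact Or.inl rfl
    | add x y hx hy ihx ihy =>
      rcases ihx with rfl | ⟨i, r, hr, rfl⟩
      · rcases ihy with rfl | ⟨i, r, hr, rfl⟩
        · exact Or.inl (by simp)
        · exact Or.inr ⟨i, r, hr, by rw [zero_add]⟩
      · exact Or.inr ⟨i, r + y, add_mem hr hy, by rw [add_assoc]⟩
  -- the Apery set is contained in a finite set
  apply Set.Finite.subset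
    (Set.finite_range (fun k : (∀ j : Fin n, Fin (m j)) => ∑ j, (k j : ℕ) • a j))
  rintro s ⟨hsS, hap⟩
  obtain ⟨k, rfl⟩ := hrep s hsS
  by_cases hk : ∀ j, k j < m j
  · exact ⟨fun j => ⟨k j, hk j⟩, rfl⟩
  · exfalso
    push_neg at hk
    obtain ⟨j, hj⟩ := hk
    have hne : m j • a j ≠ 0 := by
      intro h
      apply ha j
      funext t
      have := congrFun h t
      simp only [Pi.smul_apply, smul_eq_mul, Pi.zero_apply] at this
      rcases Nat.mul_eq_zero.mp this with h' | h'
      · have := hm j; omega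
      · simp [h']
    rcases hsplit _ (hmem j) with h0 | ⟨i, r, hr, hsp⟩
    · exact hne h0
    apply hap i
    refine ⟨r + (k j - m j) • a j + ∑ j' ∈ Finset.univ.erase j, k j' • a j', ?_, ?_⟩
    · exact add_mem (add_mem (hES hr) (AddSubmonoid.nsmul_mem S (haS j) _))
        (AddSubmonoid.sum_mem S (fun j' _ => AddSubmonoid.nsmul_mem S (haS j') _))
    · rw [← Finset.add_sum_erase _ _ (Finset.mem_univ j)]
      have : k j • a j = m j • a j + (k j - m j) • a j := by
        rw [← add_smul, Nat.add_sub_cancel' hj]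
      rw [this, hsp]
      abel
end

section
/- Let S ⊆ ℕ³ be a simplicial affine monoid with extremal rays e₁, e₂, e₃ (each a positive multiple of a standard basis vector). Define the exceptional set E_S^{3,3} := {s ∈ S : s − eᵢ ∈ S for all i; s − (eᵢ + eⱼ) ∈ S for all i ≠ j; and s − (e₁+e₂+e₃) ∉ S}. Then E_S^{3,3} is finite. -/
/-- Let `S ⊆ ℕ³` be a simplicial affine monoid with extremal rays
`e₁, e₂, e₃` (positive multiples `eᵢ = ωᵢεᵢ` of the standard basis vectors,
the last three generators of `S`).  Then the exceptional set
`E_S^{3,3} = {s ∈ S : s − eᵢ ∈ S ∀i; s − (eᵢ+eⱼ) ∈ S ∀ i ≠ j;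
s − (e₁+e₂+e₃) ∉ S}` is finite.  Here `s − v ∈ S` means `∃ s' ∈ S, s = v + s'`. -/
theorem stmt_4 (n : ℕ) (hdn : 3 ≤ n) (a : Fin n → (Fin 3 → ℕ))
    (ha : ∀ i, a i ≠ 0)
    (S : AddSubmonoid (Fin 3 → ℕ)) (hS : S = AddSubmonoid.closure (Set.range a))
    (ω : Fin 3 → ℕ) (hω : ∀ i, 0 < ω i)
    (e : Fin 3 → (Fin 3 → ℕ)) (hedef : ∀ i j, e i j = if i = j then ω i else 0)
    (hlast : ∀ i : Fin 3, e i = a (Fin.cast (Nat.sub_add_cancel hdn) (Fin.natAdd (n - 3) i)))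
    (hcone : ∀ j : Fin n, ∃ m : ℕ, 0 < m ∧
      m • a j ∈ AddSubmonoid.closure (Set.range e)) :
    {s | s ∈ S ∧ (∀ i : Fin 3, ∃ s' ∈ S, s = e i + s') ∧
      (∀ i j : Fin 3, i ≠ j → ∃ s' ∈ S, s = (e i + e j) + s') ∧
      ¬ ∃ s' ∈ S, s = (e 0 + e 1 + e 2) + s'}.Finite := by
  set E : Set (Fin 3 → ℕ) :=
    {s | s ∈ S ∧ (∀ i : Fin 3, ∃ s' ∈ S, s = e i + s') ∧
      (∀ i j : Fin 3, i ≠ j → ∃ s' ∈ S, s = (e i + e j) + s') ∧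
      ¬ ∃ s' ∈ S, s = (e 0 + e 1 + e 2) + s'} with hE
  have heS : ∀ i, e i ∈ S := by
    intro i
    rw [hS]
    exact AddSubmonoid.subset_closure ⟨_, (hlast i).symm⟩
  -- key: two elements of E in the same residue class are comparable only if equal
  have key : ∀ s ∈ E, ∀ s' ∈ E, (∀ i, s i % ω i = s' i % ω i) → s ≤ s' → s = s' := by
    intro s hs s' hs' hres hle
    obtain ⟨_, _, hpairs, _⟩ := hs
    obtain ⟨_, _, _, hbad⟩ := hs'
    have hdvd : ∀ i, ω i ∣ s' i - s i := fun i =>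
      (Nat.modEq_iff_dvd' (hle i)).mp (hres i)
    have hexists : ∀ i, ∃ m, s' i = s i + m * ω i := by
      intro i
      obtain ⟨c, hc⟩ := hdvd i
      refine ⟨c, ?_⟩
      have h3 : s i ≤ s' i := hle i
      rw [Nat.mul_comm, ← hc]
      omega
    choose k hk using hexists
    have hc : (fun i => k i * ω i) = k 0 • e 0 + k 1 • e 1 + k 2 • e 2 := by
      funext j
      fin_cases j <;> simp [hedef, Fin.ext_iff]
    have hs'v : s' = s + (k 0 • e 0 + k 1 • e 1 + k 2 • e 2) := by
      rw [← hc]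
      funext i
      exact hk i
    by_cases hzero : ∀ i, k i = 0
    · funext i
      have := hk i
      rw [hzero i] at this
      omega
    · push_neg at hzero
      obtain ⟨i₀, hi₀⟩ := hzero
      exfalso
      apply hbad
      have hor : k 0 ≠ 0 ∨ k 1 ≠ 0 ∨ k 2 ≠ 0 := by
        fin_cases i₀
        · exact Or.inl hi₀
        · exact Or.inr (Or.inl hi₀)
        · exact Or.inr (Or.inr hi₀)
      rcases hor with h | h | h
      · obtain ⟨t, htS, hst⟩ := hpairs 1 2 (by decide)
        refine ⟨t + (k 0 - 1) • e 0 + k 1 • e 1 + k 2 • e 2, ?_, ?_⟩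
        · exact S.add_mem (S.add_mem (S.add_mem htS (S.nsmul_mem (heS 0) _))
            (S.nsmul_mem (heS 1) _)) (S.nsmul_mem (heS 2) _)
        · have hk0 : k 0 • e 0 = e 0 + (k 0 - 1) • e 0 := by
            conv_lhs => rw [show k 0 = 1 + (k 0 - 1) by omega]
            rw [add_nsmul, one_nsmul]
          rw [hs'v, hst, hk0]
          abel
      · obtain ⟨t, htS, hst⟩ := hpairs 0 2 (by decide)
        refine ⟨t + k 0 • e 0 + (k 1 - 1) • e 1 + k 2 • e 2, ?_, ?_⟩
        · exact S.add_mem (S.add_mem (S.add_mem htS (S.nsmul_mem (heS 0) _))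
            (S.nsmul_mem (heS 1) _)) (S.nsmul_mem (heS 2) _)
        · have hk1 : k 1 • e 1 = e 1 + (k 1 - 1) • e 1 := by
            conv_lhs => rw [show k 1 = 1 + (k 1 - 1) by omega]
            rw [add_nsmul, one_nsmul]
          rw [hs'v, hst, hk1]
          abel
      · obtain ⟨t, htS, hst⟩ := hpairs 0 1 (by decide)
        refine ⟨t + k 0 • e 0 + k 1 • e 1 + (k 2 - 1) • e 2, ?_, ?_⟩
        · exact S.add_mem (S.add_mem (S.add_mem htS (S.nsmul_mem (heS 0) _))
            (S.nsmul_mem (heS 1) _)) (S.nsmul_mem (heS 2) _)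
        · have hk2 : k 2 • e 2 = e 2 + (k 2 - 1) • e 2 := by
            conv_lhs => rw [show k 2 = 1 + (k 2 - 1) by omega]
            rw [add_nsmul, one_nsmul]
          rw [hs'v, hst, hk2]
          abel
  -- residues give a finite decomposition of E into antichains
  set φ : (Fin 3 → ℕ) → (Fin 3 → ℕ) := fun s i => s i % ω i with hφ
  have hRfin : (Set.pi Set.univ fun i : Fin 3 => Set.Iio (ω i)).Finite :=
    Set.Finite.pi fun i => Set.finite_Iio _
  have hcover : E ⊆ ⋃ r ∈ (Set.pi Set.univ fun i : Fin 3 => Set.Iio (ω i)),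
      E ∩ φ ⁻¹' {r} := by
    intro s hsE
    refine Set.mem_biUnion ?_ ⟨hsE, rfl⟩
    intro i _
    exact Nat.mod_lt _ (hω i)
  refine Set.Finite.subset (Set.Finite.biUnion hRfin fun r _ => ?_) hcover
  have hpwo : Set.IsPWO (E ∩ φ ⁻¹' {r}) :=
    (Set.IsPWO.pi (s := fun _ : Fin 3 => (Set.univ : Set ℕ))
      fun _ => Set.isPWO_of_wellQuasiOrderedLE _).mono (fun x _ i _ => Set.mem_univ (x i))
  refine IsAntichain.finite_of_partiallyWellOrderedOn (r := (· ≤ ·)) ?_ hpwo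
  intro s hs s' hs' hne hle
  refine hne (key s hs.1 s' hs'.1 (fun i => ?_) hle)
  have h1 : φ s = r := hs.2
  have h2 : φ s' = r := hs'.2
  calc s i % ω i = φ s i := rfl
    _ = φ s' i := by rw [h1, h2]
    _ = s' i % ω i := rfl
end

section
/- Let R = k[x₁,…,xₙ], I ⊂ R an ω-homogeneous ideal for a weight vector ω ∈ (ℤ⁺)ⁿ, d = dim(R/I), and assume A = k[x_{n−d+1},…,xₙ] is a Noether normalization of R/I. Let >_ω be the ω-graded reverse lexicographic order on R and B₀ the set of monomials not in in(I) + ⟨x_{n−d+1},…,xₙ⟩. Then the classes {u + I : u ∈ B₀} form a generating set of R/I as an A-module. -/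
/-!
STATEMENT 10: Let `R = k[x₁,…,xₙ]` (here `n = m + d`), `I ⊂ R` an
`ω`-homogeneous ideal for a weight vector `ω ∈ (ℤ⁺)ⁿ`, `d = dim(R/I)`, and
assume `A = k[x_{n−d+1},…,xₙ]` (last `d` variables) is a Noether normalization
of `R/I`.  Let `>_ω` be the `ω`-graded reverse lexicographic order and `B₀`
the set of monomials not in `in(I) + ⟨x_{n−d+1},…,xₙ⟩`.  Then
`{u + I : u ∈ B₀}` generates `R/I` as an `A`-module.
-/

open MvPolynomial

/-- `ω`-weighted degree of a monomial exponent. -/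
def wdeg {N : ℕ} (ω : Fin N → ℕ) (α : Fin N →₀ ℕ) : ℕ := ∑ i, ω i * α i

/-- `ltw ω β α` means `x^β <_ω x^α` in the `ω`-graded reverse lexicographic
order: smaller `ω`-degree, or equal `ω`-degree and the last nonzero entry of
`α − β` is negative (at the largest index where they differ, `α` is smaller). -/
def ltw {N : ℕ} (ω : Fin N → ℕ) (β α : Fin N →₀ ℕ) : Prop :=
  wdeg ω β < wdeg ω α ∨
    (wdeg ω β = wdeg ω α ∧ ∃ j, α j < β j ∧ ∀ i, j < i → α i = β i)

/-- The initial ideal of `I` w.r.t. `>_ω`: the ideal generated by the initial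
monomials (the `>_ω`-largest monomials) of the nonzero elements of `I`. -/
noncomputable def inIdeal {N : ℕ} (k : Type) [Field k] (ω : Fin N → ℕ)
    (I : Ideal (MvPolynomial (Fin N) k)) : Ideal (MvPolynomial (Fin N) k) :=
  Ideal.span {p | ∃ f ∈ I, ∃ s ∈ f.support,
    (∀ t ∈ f.support, t = s ∨ ltw ω t s) ∧ p = monomial s (1 : k)}

/-- The ideal generated by the last `d` variables of `k[x₁,…,x_{m+d}]`. -/
noncomputable def lastVarsIdeal (k : Type) [Field k] (m d : ℕ) :
    Ideal (MvPolynomial (Fin (m + d)) k) :=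
  Ideal.span {p | ∃ j : Fin d, p = X (Fin.natAdd m j)}

/-- The inclusion `A = k[y₁,…,y_d] → R = k[x₁,…,x_{m+d}]` onto the last `d`
variables. -/
noncomputable def iota (k : Type) [Field k] (m d : ℕ) :
    MvPolynomial (Fin d) k →+* MvPolynomial (Fin (m + d)) k :=
  (MvPolynomial.aeval (fun j : Fin d => MvPolynomial.X (Fin.natAdd m j))).toRingHom

/-- The `A`-algebra (hence `A`-module) structure on `R/I` via `iota`. -/
noncomputable instance quotAlgebra (k : Type) [Field k] (m d : ℕ)
    (I : Ideal (MvPolynomial (Fin (m + d)) k)) :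
    Algebra (MvPolynomial (Fin d) k) (MvPolynomial (Fin (m + d)) k ⧸ I) :=
  ((Ideal.Quotient.mk I).comp (iota k m d)).toAlgebra

namespace Stmt10Aux

variable {n : ℕ}

lemma wdeg_add (ω : Fin n → ℕ) (a b : Fin n →₀ ℕ) :
    wdeg ω (a + b) = wdeg ω a + wdeg ω b := by
  simp [wdeg, Finsupp.add_apply, Nat.mul_add, Finset.sum_add_distrib]

lemma wdeg_single (ω : Fin n → ℕ) (i : Fin n) (c : ℕ) :
    wdeg ω (Finsupp.single i c) = ω i * c := by
  classical
  unfold wdeg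
  rw [Finset.sum_eq_single i]
  · simp
  · intro b _ hb; simp [Finsupp.single_apply, Ne.symm hb]
  · simp

lemma apply_le_wdeg (ω : Fin n → ℕ) (hω : ∀ i, 0 < ω i) (α : Fin n →₀ ℕ) (i : Fin n) :
    α i ≤ wdeg ω α := by
  calc α i ≤ ω i * α i := Nat.le_mul_of_pos_left _ (hω i)
    _ ≤ wdeg ω α := Finset.single_le_sum (f := fun i => ω i * α i)
        (fun i _ => Nat.zero_le _) (Finset.mem_univ i)

/-- auxiliary measure within a fixed degree `D`. -/
def nuC (D : ℕ) (α : Fin n →₀ ℕ) : ℕ := ∑ i : Fin n, (D - α i) * (D + 1) ^ (i : ℕ)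

def Phi (n D : ℕ) : ℕ := ∑ e ∈ Finset.range D, (e + 1) ^ n

def mu (ω : Fin n → ℕ) (α : Fin n →₀ ℕ) : ℕ := Phi n (wdeg ω α) + nuC (wdeg ω α) α

lemma geom (D j : ℕ) : (∑ i ∈ Finset.range j, D * (D + 1) ^ i) + 1 = (D + 1) ^ j := by
  induction j with
  | zero => simp
  | succ j ih =>
    rw [Finset.sum_range_succ, pow_succ, ← ih]
    ring
    
lemma nuC_lt (D : ℕ) (α : Fin n →₀ ℕ) : nuC D α < (D + 1) ^ n := by
  have h1 : nuC D α ≤ ∑ i : Fin n, D * (D + 1) ^ (i : ℕ) :=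
    Finset.sum_le_sum fun i _ => Nat.mul_le_mul_right _ (Nat.sub_le _ _)
  have h2 : ∑ i : Fin n, D * (D + 1) ^ (i : ℕ) = ∑ i ∈ Finset.range n, D * (D + 1) ^ i :=
    Fin.sum_univ_eq_sum_range (fun i => D * (D + 1) ^ i) n
  have := geom D n
  omega

lemma Phi_mono (n : ℕ) : Monotone (Phi n) := fun a b hab =>
  Finset.sum_le_sum_of_subset (Finset.range_subset_range.mpr hab)

lemma Phi_succ (n D : ℕ) : Phi n (D + 1) = Phi n D + (D + 1) ^ n :=
  Finset.sum_range_succ _ _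

lemma mu_lt (ω : Fin n → ℕ) (hω : ∀ i, 0 < ω i) {β α : Fin n →₀ ℕ}
    (h : ltw ω β α) : mu ω β < mu ω α := by
  rcases h with h | ⟨hdeg, j, hj1, hj2⟩
  · unfold mu
    have h1 := nuC_lt (wdeg ω β) β
    have h2 : Phi n (wdeg ω β + 1) ≤ Phi n (wdeg ω α) := Phi_mono n h
    rw [Phi_succ] at h2
    have h3 : Phi n (wdeg ω α) ≤ Phi n (wdeg ω α) + nuC (wdeg ω α) α := Nat.le_add_right _ _
    omega
  · unfold mu
    rw [hdeg]
    set D := wdeg ω α with hD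
    have hkey : nuC D β < nuC D α := by
      classical
      have hβD : β j ≤ D := by rw [← hdeg]; exact apply_le_wdeg ω hω β j
      -- extend to functions on ℕ
      set aE : ℕ → ℕ := fun i => if h : i < n then α ⟨i, h⟩ else 0 with haE
      set bE : ℕ → ℕ := fun i => if h : i < n then β ⟨i, h⟩ else 0 with hbE
      have hsa : nuC D α = ∑ i ∈ Finset.range n, (D - aE i) * (D + 1) ^ i := by
        rw [← Fin.sum_univ_eq_sum_range (fun i => (D - aE i) * (D + 1) ^ i) n]
        unfold nuC
        exact Finset.sum_congr rfl fun i _ => by simp [haE, i.isLt]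
      have hsb : nuC D β = ∑ i ∈ Finset.range n, (D - bE i) * (D + 1) ^ i := by
        rw [← Fin.sum_univ_eq_sum_range (fun i => (D - bE i) * (D + 1) ^ i) n]
        unfold nuC
        exact Finset.sum_congr rfl fun i _ => by simp [hbE, i.isLt]
      set J : ℕ := (j : ℕ) with hJ
      have hJn : J + 1 ≤ n := j.isLt
      have hsplit : ∀ c : ℕ → ℕ,
          ∑ i ∈ Finset.range n, (D - c i) * (D + 1) ^ i
            = (∑ i ∈ Finset.range J, (D - c i) * (D + 1) ^ i)
              + (D - c J) * (D + 1) ^ J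
              + ∑ i ∈ Finset.Ico (J + 1) n, (D - c i) * (D + 1) ^ i := by
        intro c
        rw [← Finset.sum_range_add_sum_Ico _ hJn, Finset.sum_range_succ]
      have htail : ∑ i ∈ Finset.Ico (J + 1) n, (D - aE i) * (D + 1) ^ i
          = ∑ i ∈ Finset.Ico (J + 1) n, (D - bE i) * (D + 1) ^ i := by
        refine Finset.sum_congr rfl fun i hi => ?_
        obtain ⟨hi1, hi2⟩ := Finset.mem_Ico.mp hi
        have : α ⟨i, hi2⟩ = β ⟨i, hi2⟩ := hj2 ⟨i, hi2⟩ (by simpa [Fin.lt_def] using hi1)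
        simp [haE, hbE, hi2, this]
      have hhead : ∑ i ∈ Finset.range J, (D - bE i) * (D + 1) ^ i
          ≤ ∑ i ∈ Finset.range J, D * (D + 1) ^ i :=
        Finset.sum_le_sum fun i _ => Nat.mul_le_mul_right _ (Nat.sub_le _ _)
      have hgeom := geom D J
      have haJ : aE J = α j := by simp [haE, hJ, j.isLt]
      have hbJ : bE J = β j := by simp [hbE, hJ, j.isLt]
      have hmid : (D - bE J) * (D + 1) ^ J + (D + 1) ^ J ≤ (D - aE J) * (D + 1) ^ J := by
        rw [haJ, hbJ]
        have : (D - β j) + 1 ≤ D - α j := by omega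
        calc (D - β j) * (D + 1) ^ J + (D + 1) ^ J = ((D - β j) + 1) * (D + 1) ^ J := by ring
          _ ≤ (D - α j) * (D + 1) ^ J := Nat.mul_le_mul_right _ this
      rw [hsa, hsb, hsplit aE, hsplit bE, htail]
      have hz : 0 ≤ ∑ i ∈ Finset.range J, (D - aE i) * (D + 1) ^ i := Nat.zero_le _
      omega
    omega

lemma ltw_add (ω : Fin n → ℕ) (γ : Fin n →₀ ℕ) {β α : Fin n →₀ ℕ}
    (h : ltw ω β α) : ltw ω (γ + β) (γ + α) := by
  rcases h with h | ⟨hdeg, j, hj1, hj2⟩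
  · left; rw [wdeg_add, wdeg_add]; omega
  · right
    refine ⟨by rw [wdeg_add, wdeg_add, hdeg], j, ?_, ?_⟩
    · simp only [Finsupp.add_apply]; omega
    · intro i hi; simp only [Finsupp.add_apply, hj2 i hi]

end Stmt10Aux

set_option synthInstance.maxHeartbeats 400000

set_option maxHeartbeats 1000000 in
theorem stmt_10 (k : Type) [Field k] (m d : ℕ)
    (ω : Fin (m + d) → ℕ) (hω : ∀ i, 0 < ω i)
    (I : Ideal (MvPolynomial (Fin (m + d)) k))
    (hhom : ∀ f ∈ I, ∀ s : ℕ, MvPolynomial.weightedHomogeneousComponent ω s f ∈ I)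
    (hdim : ringKrullDim (MvPolynomial (Fin (m + d)) k ⧸ I) = (d : ℕ))
    (hinj : Function.Injective ((Ideal.Quotient.mk I).comp (iota k m d)))
    (hint : RingHom.IsIntegral ((Ideal.Quotient.mk I).comp (iota k m d)))
    (B0 : Set (Fin (m + d) →₀ ℕ))
    (hB0 : B0 = {u | monomial u (1 : k) ∉ inIdeal k ω I ⊔ lastVarsIdeal k m d}) :
    Submodule.span (MvPolynomial (Fin d) k)
      {x : MvPolynomial (Fin (m + d)) k ⧸ I |
        ∃ u ∈ B0, x = Ideal.Quotient.mk I (monomial u (1 : k))} = ⊤ := by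
  classical
  open Stmt10Aux in
  set A := MvPolynomial (Fin d) k
  set mk := Ideal.Quotient.mk I with hmk
  set M := Submodule.span A
      {x : MvPolynomial (Fin (m + d)) k ⧸ I |
        ∃ u ∈ B0, x = mk (monomial u (1 : k))} with hM
  have hsmul : ∀ (a : A) (x : MvPolynomial (Fin (m + d)) k ⧸ I),
      a • x = mk (iota k m d a) * x := fun a x => by
    rw [Algebra.smul_def]; rfl
  have helper : ∀ h : MvPolynomial (Fin (m + d)) k,
      (∀ t ∈ h.support, mk (monomial t (1 : k)) ∈ M) → mk h ∈ M := by
    intro h H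
    rw [h.as_sum, map_sum]
    refine Submodule.sum_mem _ fun t ht => ?_
    have heq : mk (monomial t (coeff t h)) =
        (C (coeff t h) : A) • mk (monomial t (1 : k)) := by
      rw [hsmul]
      have h1 : iota k m d (C (coeff t h)) = C (coeff t h) := by
        simp [iota]
      rw [h1, ← map_mul, C_mul_monomial, mul_one]
    rw [heq]
    exact Submodule.smul_mem _ _ (H t ht)
  have key : ∀ N : ℕ, ∀ u : Fin (m + d) →₀ ℕ, Stmt10Aux.mu ω u < N →
      mk (monomial u (1 : k)) ∈ M := by
    intro N
    induction N using Nat.strong_induction_on with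
    | _ N ih =>
    intro u hu
    by_cases hmem : u ∈ B0
    · exact Submodule.subset_span ⟨u, hmem, rfl⟩
    · have hin : monomial u (1 : k) ∈ inIdeal k ω I ⊔ lastVarsIdeal k m d := by
        rw [hB0] at hmem; exact not_not.mp hmem
      set T1 : Set (Fin (m + d) →₀ ℕ) :=
        {s | ∃ f ∈ I, s ∈ f.support ∧ ∀ t ∈ f.support, t = s ∨ ltw ω t s} with hT1
      set T2 : Set (Fin (m + d) →₀ ℕ) :=
        {s | ∃ j : Fin d, s = Finsupp.single (Fin.natAdd m j) 1} with hT2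
      have h1 : inIdeal k ω I = Ideal.span ((fun s => monomial s (1 : k)) '' T1) := by
        unfold inIdeal; congr 1; ext p
        constructor
        · rintro ⟨f, hf, s, hs, hlead, rfl⟩; exact ⟨s, ⟨f, hf, hs, hlead⟩, rfl⟩
        · rintro ⟨s, ⟨f, hf, hs, hlead⟩, rfl⟩; exact ⟨f, hf, s, hs, hlead, rfl⟩
      have h2 : lastVarsIdeal k m d = Ideal.span ((fun s => monomial s (1 : k)) '' T2) := by
        unfold lastVarsIdeal; congr 1; ext p
        constructor
        · rintro ⟨j, rfl⟩; exact ⟨_, ⟨j, rfl⟩, rfl⟩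
        · rintro ⟨s, ⟨j, rfl⟩, rfl⟩; exact ⟨j, rfl⟩
      rw [h1, h2, ← Ideal.span_union, ← Set.image_union] at hin
      have husup : u ∈ (monomial u (1 : k)).support := by
        rw [mem_support_iff, coeff_monomial, if_pos rfl]; exact one_ne_zero
      obtain ⟨s, hsT, hsle⟩ := mem_ideal_span_monomial_image.mp hin u husup
      rcases hsT with hsT | hsT
      · -- leading monomial of some f ∈ I
        obtain ⟨f, hfI, hs_supp, hlead⟩ := hsT
        set c : k := coeff s f with hc
        have hcne : c ≠ 0 := mem_support_iff.mp hs_supp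
        set γ : Fin (m + d) →₀ ℕ := u - s with hγdef
        have hγ : γ + s = u := tsub_add_cancel_of_le hsle
        set g : MvPolynomial (Fin (m + d)) k := monomial γ c⁻¹ * f with hg
        have hgI : g ∈ I := I.mul_mem_left _ hfI
        have hg0 : mk g = 0 := Ideal.Quotient.eq_zero_iff_mem.mpr hgI
        have hcu : coeff u g = 1 := by
          rw [hg, ← hγ, coeff_monomial_mul, ← hc, inv_mul_cancel₀ hcne]
        have hgdec : g = ∑ t' ∈ f.support, monomial (γ + t') (c⁻¹ * coeff t' f) := by
          rw [hg]
          conv_lhs => rw [f.as_sum]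
          rw [Finset.mul_sum]
          exact Finset.sum_congr rfl fun t' _ => monomial_mul
        have hrw : mk (monomial u (1 : k)) = mk (monomial u (1 : k) - g) := by
          rw [map_sub, hg0, sub_zero]
        rw [hrw]
        refine helper _ fun t ht => ?_
        have hct : coeff t (monomial u (1 : k) - g) ≠ 0 := mem_support_iff.mp ht
        have htu : t ≠ u := by
          intro h; subst h
          rw [coeff_sub, hcu, coeff_monomial, if_pos rfl, sub_self] at hct
          exact hct rfl
        have hctg : coeff t g ≠ 0 := by
          rw [coeff_sub, coeff_monomial, if_neg (by exact fun h => htu h.symm)] at hct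
          simpa using hct
        have htg : t ∈ g.support := mem_support_iff.mpr hctg
        rw [hgdec] at htg
        have := MvPolynomial.support_sum htg
        obtain ⟨t', ht'f, ht'⟩ := Finset.mem_biUnion.mp this
        have htt' : t = γ + t' := by
          by_contra hne
          rw [mem_support_iff, coeff_monomial, if_neg (fun h => hne h.symm)] at ht'
          exact ht' rfl
        have ht's : t' ≠ s := by
          intro h; subst h; exact htu (htt'.trans hγ)
        have hlt : ltw ω t' s := (hlead t' ht'f).resolve_left ht's
        have hlt2 : ltw ω t u := by
          rw [htt', ← hγ]; exact Stmt10Aux.ltw_add ω γ hlt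
        have hmu : Stmt10Aux.mu ω t < Stmt10Aux.mu ω u := Stmt10Aux.mu_lt ω hω hlt2
        exact ih (Stmt10Aux.mu ω u) hu t hmu
      · -- divisible by one of the last d variables
        obtain ⟨j, rfl⟩ := hsT
        set i : Fin (m + d) := Fin.natAdd m j with hi
        have hui : 1 ≤ u i := Finsupp.single_le_iff.mp hsle
        set v : Fin (m + d) →₀ ℕ := u - Finsupp.single i 1 with hv
        have hvu : Finsupp.single i 1 + v = u :=
          add_tsub_cancel_of_le (Finsupp.single_le_iff.mpr hui)
        have heq : mk (monomial u (1 : k)) = (X j : A) • mk (monomial v (1 : k)) := by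
          rw [hsmul]
          have h1 : iota k m d (X j : A) = X i := by simp [iota, hi]
          rw [h1, ← map_mul]
          congr 1
          rw [X, monomial_mul, one_mul, hvu]
        have hwlt : wdeg ω v < wdeg ω u := by
          rw [← hvu, Stmt10Aux.wdeg_add, Stmt10Aux.wdeg_single, mul_one]
          have := hω i
          omega
        have hmu : Stmt10Aux.mu ω v < Stmt10Aux.mu ω u :=
          Stmt10Aux.mu_lt ω hω (Or.inl hwlt)
        rw [heq]
        exact Submodule.smul_mem _ _ (ih (Stmt10Aux.mu ω u) hu v hmu)
  rw [eq_top_iff]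
  rintro x -
  obtain ⟨f, rfl⟩ := Ideal.Quotient.mk_surjective x
  exact helper f fun t _ => key (Stmt10Aux.mu ω t + 1) t (Nat.lt_succ_self _)
end
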